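/- arXiv:1509.08441 — 2 statements merged into one kernel-verified Lean document; each statement's English description precedes it below -/
import Mathlib

section
/- Let θ ∈ (π, 2π) be a real number, m₀ a positive integer, and δ a positive real with δ < min{θ/π − 1, 1 − θ/(2π)}. If min{ frac(m₀θ/π), 1 − frac(m₀θ/π) } < δ (where frac denotes the fractional part), then there exists an integer c with (2m₀ − 2)θ/(2π) < c < (2m₀ − 1)θ/(2π). -/
/-- Key arithmetic lemma in the common index jump theorem application:
for θ ∈ (π, 2π), m₀ ≥ 1 and δ small enough, closeness of m₀θ/π to an integer
forces an integer strictly between (2m₀−2)θ/(2π) and (2m₀−1)θ/(2π). -/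
theorem stmt_0 (θ : ℝ) (hθ₁ : Real.pi < θ) (hθ₂ : θ < 2 * Real.pi)
    (m₀ : ℕ) (hm₀ : 1 ≤ m₀) (δ : ℝ) (hδ : 0 < δ)
    (hδlt : δ < min (θ / Real.pi - 1) (1 - θ / (2 * Real.pi)))
    (hfrac : min (Int.fract ((m₀ : ℝ) * θ / Real.pi))
        (1 - Int.fract ((m₀ : ℝ) * θ / Real.pi)) < δ) :
    ∃ c : ℤ, (2 * (m₀ : ℝ) - 2) * θ / (2 * Real.pi) < (c : ℝ) ∧
      (c : ℝ) < (2 * (m₀ : ℝ) - 1) * θ / (2 * Real.pi) := by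
  have hπ := Real.pi_pos
  set x := (m₀ : ℝ) * θ / Real.pi with hx
  have hmin1 : δ < θ / Real.pi - 1 := lt_of_lt_of_le hδlt (min_le_left _ _)
  have hmin2 : δ < 1 - θ / (2 * Real.pi) := lt_of_lt_of_le hδlt (min_le_right _ _)
  have hfl : x - Int.fract x = (⌊x⌋ : ℝ) := Int.self_sub_fract x
  have hf0 : 0 ≤ Int.fract x := Int.fract_nonneg x
  have hf1 : Int.fract x < 1 := Int.fract_lt_one x
  have h1 : (2 * (m₀ : ℝ) - 2) * θ / (2 * Real.pi) = x - θ / Real.pi := by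
    rw [hx]; field_simp
  have h2 : (2 * (m₀ : ℝ) - 1) * θ / (2 * Real.pi) = x - θ / (2 * Real.pi) := by
    rw [hx]; field_simp
  have hd1 : 1 < θ / Real.pi := (one_lt_div hπ).2 hθ₁
  have hd2 : θ / (2 * Real.pi) < 1 := (div_lt_one (by linarith)).2 hθ₂
  rcases lt_or_ge (Int.fract x) δ with h | h
  · refine ⟨⌊x⌋ - 1, ?_, ?_⟩
    · rw [h1]; push_cast; linarith
    · rw [h2]; push_cast; linarith
  · have h' : 1 - Int.fract x < δ := by
      rcases min_lt_iff.1 hfrac with h'' | h''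
      · exact absurd h'' (not_lt.2 h)
      · exact h''
    refine ⟨⌊x⌋, ?_, ?_⟩
    · rw [h1]; linarith
    · rw [h2]; linarith
end

section
/- Let 𝔅 : S¹ → ℤ be a function (Bott's index function of a periodic orbit) and define μ(k) = Σ_{z ∈ S¹, z^k = 1} 𝔅(z) for k ∈ ℕ. If 𝔅 is Riemann integrable, then lim_{k→∞} μ(k)/k exists and equals (1/2π) ∫_{S¹} 𝔅(z) dz. -/
open Filter Topology MeasureTheory

/-- Bott's formula and the mean index: if 𝔅 : S¹ → ℤ (written as a 2π-periodic
function of the angle) is Riemann integrable (bounded and a.e. continuous), and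
μ(k) = Σ_{z^k = 1} 𝔅(z) is the sum of 𝔅 over the k-th roots of unity, then
μ(k)/k converges to (1/2π) ∫_{S¹} 𝔅. -/
theorem stmt_7 (B : ℝ → ℤ)
    (hper : Function.Periodic B (2 * Real.pi))
    (hbd : ∃ C : ℝ, ∀ θ : ℝ, |(B θ : ℝ)| ≤ C)
    (hae : ∀ᵐ θ : ℝ ∂MeasureTheory.volume, ContinuousAt (fun x => (B x : ℝ)) θ)
    (μ : ℕ → ℤ)
    (hμ : ∀ k : ℕ, μ k = ∑ j ∈ Finset.range k, B (2 * Real.pi * (j : ℝ) / (k : ℝ))) :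
    Tendsto (fun k : ℕ => (μ k : ℝ) / (k : ℝ)) atTop
      (𝓝 ((1 / (2 * Real.pi)) * ∫ θ in (0:ℝ)..(2 * Real.pi), (B θ : ℝ))) := by
  obtain ⟨C, hC⟩ := hbd
  set T : ℝ := 2 * Real.pi with hT
  have hTpos : 0 < T := by positivity
  -- step approximations
  set s : ℕ → ℝ → ℝ := fun k θ => (B (T * (⌊(k : ℝ) * θ / T⌋ : ℝ) / (k : ℝ)) : ℝ) with hs
  set ν : Measure ℝ := volume.restrict (Set.Ioc 0 T) with hν
  -- measurability of the step functions
  have hmeas : ∀ k, Measurable (s k) := by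
    intro k
    have h1 : Measurable fun θ : ℝ => ⌊(k : ℝ) * θ / T⌋ :=
      ((measurable_id.const_mul _).div_const _).floor
    exact (measurable_from_top
      (f := fun n : ℤ => (B (T * (n : ℝ) / (k : ℝ)) : ℝ))).comp h1
  -- pointwise convergence at continuity points
  have hpt : ∀ θ : ℝ, ContinuousAt (fun x => (B x : ℝ)) θ →
      Tendsto (fun k : ℕ => s k θ) atTop (𝓝 ((B θ : ℝ))) := by
    intro θ hθ
    have hx : Tendsto (fun k : ℕ => T * (⌊(k : ℝ) * θ / T⌋ : ℝ) / (k : ℝ)) atTop (𝓝 θ) := by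
      apply tendsto_of_tendsto_of_tendsto_of_le_of_le'
        (g := fun k : ℕ => θ - T / (k : ℝ)) (h := fun _ : ℕ => θ)
      · simpa using tendsto_const_nhds.sub (tendsto_const_div_atTop_nhds_zero_nat T)
      · exact tendsto_const_nhds
      · filter_upwards [eventually_ge_atTop 1] with k hk
        have hk' : (0 : ℝ) < (k : ℝ) := by exact_mod_cast hk
        have h1 : (k : ℝ) * θ / T - 1 < (⌊(k : ℝ) * θ / T⌋ : ℝ) := Int.sub_one_lt_floor _
        have h2 : ((k : ℝ) * θ / T) * T = (k : ℝ) * θ := div_mul_cancel₀ _ hTpos.ne'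
        rw [sub_le_iff_le_add, ← add_div, le_div_iff₀ hk']
        nlinarith [mul_lt_mul_of_pos_right h1 hTpos]
      · filter_upwards [eventually_ge_atTop 1] with k hk
        have hk' : (0 : ℝ) < (k : ℝ) := by exact_mod_cast hk
        have h1 : (⌊(k : ℝ) * θ / T⌋ : ℝ) ≤ (k : ℝ) * θ / T := Int.floor_le _
        have h2 : ((k : ℝ) * θ / T) * T = (k : ℝ) * θ := div_mul_cancel₀ _ hTpos.ne'
        rw [div_le_iff₀ hk']
        nlinarith [mul_le_mul_of_nonneg_right h1 hTpos.le]
    exact hθ.tendsto.comp hx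
  -- dominated convergence
  have hDCT : Tendsto (fun k : ℕ => ∫ θ, s k θ ∂ν) atTop (𝓝 (∫ θ, (B θ : ℝ) ∂ν)) := by
    apply tendsto_integral_of_dominated_convergence (fun _ => C)
    · exact fun k => ((hmeas k).aestronglyMeasurable).restrict
    · exact integrable_const C
    · intro k
      filter_upwards with θ
      simpa [Real.norm_eq_abs] using hC _
    · exact ae_restrict_of_ae (hae.mono fun θ hθ => hpt θ hθ)
  -- compute the integral of s k for k ≥ 1
  have hcomp : ∀ᶠ k : ℕ in atTop, ∫ θ, s k θ ∂ν = (T / (k : ℝ)) * (μ k : ℝ) := by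
    filter_upwards [eventually_ge_atTop 1] with k hk
    have hk' : (0 : ℝ) < (k : ℝ) := by exact_mod_cast hk
    set a : ℕ → ℝ := fun j => T * (j : ℝ) / (k : ℝ) with ha
    have hfloor : ∀ j : ℕ, ∀ θ ∈ Set.Ico (a j) (a (j + 1)), ⌊(k : ℝ) * θ / T⌋ = (j : ℤ) := by
      intro j θ hθ
      obtain ⟨h1, h2⟩ := hθ
      have e1 : (k : ℝ) * (T * (j : ℝ) / (k : ℝ)) = T * (j : ℝ) := by field_simp
      have e2 : (k : ℝ) * (T * ((j : ℝ) + 1) / (k : ℝ)) = T * ((j : ℝ) + 1) := by field_simp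
      rw [Int.floor_eq_iff]
      have c1 : (((j : ℤ) : ℝ)) = (j : ℝ) := by push_cast; ring
      simp only [ha] at h1 h2
      push_cast at h2
      constructor
      · rw [c1, le_div_iff₀ hTpos]
        nlinarith [mul_le_mul_of_nonneg_left h1 hk'.le]
      · rw [c1, div_lt_iff₀ hTpos]
        nlinarith [mul_lt_mul_of_pos_left h2 hk']
    have hconst : ∀ j : ℕ, ∀ᵐ θ ∂(volume : Measure ℝ),
        θ ∈ Set.Ioc (a j) (a (j + 1)) → s k θ = (B (a j) : ℝ) := by
      intro j
      have hnull : ∀ᵐ θ : ℝ ∂(volume : Measure ℝ), θ ≠ a (j + 1) := by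
        rw [ae_iff]
        simpa using measure_singleton (a (j + 1))
      filter_upwards [hnull] with θ hne hmem
      have hico : θ ∈ Set.Ico (a j) (a (j + 1)) :=
        ⟨hmem.1.le, lt_of_le_of_ne hmem.2 hne⟩
      have hf := hfloor j θ hico
      simp only [hs, hf, ha, Int.cast_natCast]
    have hab : ∀ j : ℕ, a j ≤ a (j + 1) := by
      intro j
      simp only [ha]
      gcongr <;> first
        | exact hTpos.le
        | (push_cast; linarith)
    have hpiece : ∀ j ∈ Finset.range k,
        (∫ x in (a j)..(a (j + 1)), s k x) = (B (a j) : ℝ) * (T / (k : ℝ)) := by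
      intro j _
      rw [intervalIntegral.integral_of_le (hab j),
        setIntegral_congr_ae measurableSet_Ioc (hconst j)]
      simp only [setIntegral_const, Real.volume_Ioc, smul_eq_mul]
      have hlen : a (j + 1) - a j = T / (k : ℝ) := by
        simp only [ha]; push_cast; field_simp; ring
      rw [Real.volume_real_Ioc, hlen, max_eq_left (by positivity)]
      ring
    have hint : ∀ j : ℕ, j < k → IntervalIntegrable (s k) volume (a j) (a (j + 1)) := by
      intro j _
      rw [intervalIntegrable_iff]
      haveI : IsFiniteMeasure (volume.restrict (Set.uIoc (a j) (a (j + 1)))) := by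
        constructor
        rw [Measure.restrict_apply_univ, Set.uIoc_of_le (hab j), Real.volume_Ioc]
        exact ENNReal.ofReal_lt_top
      apply Integrable.mono' (g := fun _ => C) (integrable_const C)
        ((hmeas k).aestronglyMeasurable.restrict)
      filter_upwards with θ
      simpa [hs, Real.norm_eq_abs] using hC _
    have hsum := intervalIntegral.sum_integral_adjacent_intervals (a := a) (μ := volume)
      (f := s k) hint
    have ha0 : a 0 = 0 := by simp [ha]
    have hak : a k = T := by
      simp only [ha]; field_simp
    rw [ha0, hak] at hsum
    have : ∫ θ, s k θ ∂ν = ∫ x in (0:ℝ)..T, s k x := by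
      rw [intervalIntegral.integral_of_le hTpos.le, hν]
    rw [this, ← hsum, Finset.sum_congr rfl hpiece, ← Finset.sum_mul]
    have hcast : ((μ k : ℝ)) = ∑ j ∈ Finset.range k, ((B (a j) : ℝ)) := by
      rw [hμ k]; push_cast; rfl
    rw [hcast]; ring
  -- conclude
  have hlim : Tendsto (fun k : ℕ => (T / (k : ℝ)) * (μ k : ℝ)) atTop
      (𝓝 (∫ θ, (B θ : ℝ) ∂ν)) := hDCT.congr' hcomp
  have hfin := hlim.const_mul (1 / T)
  have heq : (fun k : ℕ => (1 / T) * ((T / (k : ℝ)) * (μ k : ℝ)))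
      = fun k : ℕ => (μ k : ℝ) / (k : ℝ) := by
    funext k
    rcases eq_or_ne ((k : ℝ)) 0 with h | h
    · simp [h]
    · field_simp
  rw [heq] at hfin
  have hI : (∫ θ, (B θ : ℝ) ∂ν) = ∫ θ in (0:ℝ)..T, (B θ : ℝ) := by
    rw [intervalIntegral.integral_of_le hTpos.le, hν]
  rw [hI] at hfin
  exact hfin
end
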